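/- There is no small set S of group homomorphisms such that the class of groups co-orthogonal to every morphism in S consists exactly of the trivial groups. -/

import Mathlib

open Equiv Equiv.Perm Cardinal

universe u
set_option maxHeartbeats 1000000

namespace Stmt6Aux

variable {Ω : Type u} [DecidableEq Ω]

/-- The image of the alternating group on a finset `s`, inside `Perm Ω`. -/
def Hs (s : Finset Ω) : Subgroup (Equiv.Perm Ω) :=
  (alternatingGroup (↥s)).map (Equiv.Perm.ofSubtype)

/-- The equivalence between `↥s` and the subtype of `↥u` of elements in `s`. -/
def extEquiv {s t : Finset Ω} (h : s ⊆ t) :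
    {x : Ω // x ∈ s} ≃ {x : {y : Ω // y ∈ t} // (x : Ω) ∈ s} where
  toFun a := ⟨⟨a.1, h a.2⟩, a.2⟩
  invFun b := ⟨b.1.1, b.2⟩
  left_inv a := rfl
  right_inv b := rfl

lemma ofSubtype_extendDomain {s t : Finset Ω} (h : s ⊆ t) (f : Perm {x : Ω // x ∈ s}) :
    Equiv.Perm.ofSubtype (f.extendDomain (extEquiv h)) = Equiv.Perm.ofSubtype f := by
  ext x
  by_cases hxs : x ∈ s
  · have hxt : x ∈ t := h hxs
    rw [Equiv.Perm.ofSubtype_apply_of_mem _ hxt, Equiv.Perm.ofSubtype_apply_of_mem _ hxs]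
    rw [Perm.extendDomain_apply_subtype _ (extEquiv h) (b := ⟨x, hxt⟩) hxs]
    rfl
  · rw [Equiv.Perm.ofSubtype_apply_of_not_mem _ hxs]
    by_cases hxt : x ∈ t
    · rw [Equiv.Perm.ofSubtype_apply_of_mem _ hxt]
      rw [Perm.extendDomain_apply_not_subtype _ (extEquiv h) (b := ⟨x, hxt⟩) hxs]
    · rw [Equiv.Perm.ofSubtype_apply_of_not_mem _ hxt]

lemma Hs_mono {s t : Finset Ω} (h : s ⊆ t) : Hs s ≤ Hs t := by
  rintro _ ⟨f, hf, rfl⟩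
  refine ⟨f.extendDomain (extEquiv h), ?_, ofSubtype_extendDomain h f⟩
  rw [SetLike.mem_coe, Equiv.Perm.mem_alternatingGroup, Equiv.Perm.sign_extendDomain]
  exact Equiv.Perm.mem_alternatingGroup.mp hf

/-- The finitary alternating group on `Ω`. -/
def XX (Ω : Type u) [DecidableEq Ω] : Subgroup (Equiv.Perm Ω) := ⨆ s : Finset Ω, Hs s

lemma mem_XX {x : Perm Ω} : x ∈ XX Ω ↔ ∃ s : Finset Ω, x ∈ Hs s :=
  Subgroup.mem_iSup_of_directed
    (fun s t => ⟨s ∪ t, Hs_mono Finset.subset_union_left, Hs_mono Finset.subset_union_right⟩)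

lemma gen_mem {a b c : Ω} (hab : a ≠ b) (hac : a ≠ c) (hbc : b ≠ c) :
    swap a b * swap a c ∈ XX Ω := by
  rw [mem_XX]
  refine ⟨{a, b, c}, ?_⟩
  have ha : a ∈ ({a, b, c} : Finset Ω) := by simp
  have hb : b ∈ ({a, b, c} : Finset Ω) := by simp
  have hc : c ∈ ({a, b, c} : Finset Ω) := by simp
  refine ⟨swap ⟨a, ha⟩ ⟨b, hb⟩ * swap ⟨a, ha⟩ ⟨c, hc⟩, ?_, ?_⟩
  · rw [SetLike.mem_coe, Equiv.Perm.mem_alternatingGroup, map_mul,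
      Equiv.Perm.sign_swap (by simpa using hab), Equiv.Perm.sign_swap (by simpa using hac)]
    norm_num
  · rw [map_mul, Equiv.Perm.ofSubtype_swap_eq, Equiv.Perm.ofSubtype_swap_eq]


/-- Alternating group on any 5-element type is simple. -/
lemma simple_of_card5 (β : Type v) [DecidableEq β] [Fintype β] (h : Fintype.card β = 5) :
    IsSimpleGroup (alternatingGroup β) := by
  haveI : Nontrivial (alternatingGroup β) :=
    alternatingGroup.nontrivial_of_three_le_card (by rw [Nat.card_eq_fintype_card]; omega)
  let e : β ≃ Fin 5 := Fintype.equivFinOfCardEq h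
  let me : Perm β ≃* Perm (Fin 5) :=
    { toEquiv := e.permCongr
      map_mul' := by
        intro σ τ
        ext x
        simp [Equiv.permCongr_apply] }
  have hmem : ∀ σ : alternatingGroup (Fin 5), me.symm σ ∈ alternatingGroup β := by
    intro σ
    rw [Equiv.Perm.mem_alternatingGroup]
    have : me.symm (σ : Perm (Fin 5)) = e.symm.permCongr σ := rfl
    rw [this, Equiv.Perm.sign_permCongr]
    exact Equiv.Perm.mem_alternatingGroup.mp σ.2
  let ψ : alternatingGroup (Fin 5) →* alternatingGroup β :=
    MonoidHom.codRestrict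
      ((MonoidHom.comp (me.symm : Perm (Fin 5) →* Perm β)
        (alternatingGroup (Fin 5)).subtype)) _ hmem
  have hsurj : Function.Surjective ψ := by
    intro τ
    have hτ : me (τ : Perm β) ∈ alternatingGroup (Fin 5) := by
      rw [Equiv.Perm.mem_alternatingGroup]
      have : me (τ : Perm β) = e.permCongr τ := rfl
      rw [this, Equiv.Perm.sign_permCongr]
      exact Equiv.Perm.mem_alternatingGroup.mp τ.2
    refine ⟨⟨me (τ : Perm β), hτ⟩, ?_⟩
    ext
    show (me.symm (me (τ : Perm β))) _ = _
    rw [MulEquiv.symm_apply_apply]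
  exact IsSimpleGroup.isSimpleGroup_of_surjective ψ hsurj


variable {Ω : Type u} [DecidableEq Ω]

lemma Hs_le_XX (s : Finset Ω) : Hs s ≤ XX Ω := le_iSup Hs s

/-- If a subgroup `N` of `Perm Ω` is normalized by `XX Ω` and contains the image of an
element of the alternating group on `w` whose normal closure is everything, then it
contains all of `Hs w`. -/
lemma Karg (N : Subgroup (Perm Ω))
    (hNX : ∀ g ∈ XX Ω, ∀ n ∈ N, g * n * g⁻¹ ∈ N)
    (w : Finset Ω) (g : alternatingGroup (↥w))
    (hgN : Equiv.Perm.ofSubtype (g : Perm ↥w) ∈ N)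
    (hgen : Subgroup.normalClosure {g} = ⊤) : Hs w ≤ N := by
  let φ : alternatingGroup (↥w) →* Perm Ω :=
    (Equiv.Perm.ofSubtype).comp (alternatingGroup (↥w)).subtype
  have himg : ∀ γ : alternatingGroup (↥w), φ γ ∈ XX Ω := by
    intro γ
    exact Hs_le_XX w ⟨(γ : Perm ↥w), γ.2, rfl⟩
  let K : Subgroup (alternatingGroup (↥w)) := N.comap φ
  haveI hKn : K.Normal := by
    constructor
    intro k hk γ
    have : φ (γ * k * γ⁻¹) = φ γ * φ k * (φ γ)⁻¹ := by
      rw [map_mul, map_mul, map_inv]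
    show φ (γ * k * γ⁻¹) ∈ N
    rw [this]
    exact hNX (φ γ) (himg γ) (φ k) hk
  have hle : Subgroup.normalClosure {g} ≤ K :=
    Subgroup.normalClosure_le_normal (by
      intro x hx
      rw [Set.mem_singleton_iff] at hx
      subst hx
      exact hgN)
  rw [hgen] at hle
  rintro _ ⟨σ, hσ, rfl⟩
  have h1 : (⟨σ, hσ⟩ : alternatingGroup (↥w)) ∈ K := hle (Subgroup.mem_top _)
  rw [Subgroup.mem_comap] at h1
  exact h1

theorem key [Infinite Ω] (N : Subgroup (Perm Ω))
    (hNX : ∀ g ∈ XX Ω, ∀ n ∈ N, g * n * g⁻¹ ∈ N)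
    {x : Perm Ω} (hxN : x ∈ N) (hx1 : x ≠ 1) : XX Ω ≤ N := by
  obtain ⟨p, hp⟩ : ∃ p, x p ≠ p := by
    by_contra h
    push_neg at h
    exact hx1 (Equiv.ext h)
  set q := x p with hq
  have hpq : p ≠ q := fun h => hp h.symm
  obtain ⟨r, hr⟩ := Infinite.exists_notMem_finset ({p, q, x q} : Finset Ω)
  simp only [Finset.mem_insert, Finset.mem_singleton, not_or] at hr
  obtain ⟨hrp, hrq, hrxq⟩ := hr
  set t : Perm Ω := swap p r * swap p q with ht_def
  have htX : t ∈ XX Ω := gen_mem (fun h => hrp h.symm) hpq hrq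
  set y : Perm Ω := x * t * x⁻¹ * t⁻¹ with hy_def
  have hyN : y ∈ N := by
    have h1 : t * x⁻¹ * t⁻¹ ∈ N := hNX t htX x⁻¹ (N.inv_mem hxN)
    have h2 : y = x * (t * x⁻¹ * t⁻¹) := by rw [hy_def]; group
    rw [h2]
    exact N.mul_mem hxN h1
  have hq_xq : q ≠ x q := by
    intro h
    apply hpq
    apply x.injective
    rw [← hq, ← h]
  have hq_xr : q ≠ x r := by
    intro h
    apply hrp
    apply x.injective
    rw [← hq, ← h]
  have hy4 : y = swap q (x r) * swap q (x q) * (swap p q * swap p r) := by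
    have e1 : swap q (x r) = x * swap p r * x⁻¹ := by rw [hq]; exact swap_apply_apply x p r
    have e2 : swap q (x q) = x * swap p q * x⁻¹ := by rw [hq]; exact swap_apply_apply x p q
    rw [e1, e2, hy_def, ht_def, mul_inv_rev, swap_inv, swap_inv]
    group
  have hyp : y p = swap q (x r) r := by
    rw [hy4]
    simp only [Equiv.Perm.mul_apply]
    rw [swap_apply_left, swap_apply_of_ne_of_ne hrp hrq, swap_apply_of_ne_of_ne hrq hrxq]
  have hyp_ne : y p ≠ p := by
    rw [hyp]
    by_cases hxr : x r = r
    · rw [hxr, swap_apply_right]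
      exact fun h => hpq h.symm
    · rw [swap_apply_of_ne_of_ne hrq (fun h => hxr h.symm)]
      exact hrp
  have hy1 : y ≠ 1 := fun h => hyp_ne (by rw [h, Equiv.Perm.one_apply])
  set F : Finset Ω := {p, q, r, x q, x r} with hF_def
  have hF : F.card ≤ 5 :=
    le_trans (Finset.card_insert_le _ _) (Nat.succ_le_succ
      (le_trans (Finset.card_insert_le _ _) (Nat.succ_le_succ
        (le_trans (Finset.card_insert_le _ _) (Nat.succ_le_succ
          (le_trans (Finset.card_insert_le _ _) (Nat.succ_le_succ
            (le_of_eq (Finset.card_singleton _)))))))))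
  obtain ⟨u, hFu, hu5⟩ := Infinite.exists_superset_card_eq F 5 hF
  have hpu : p ∈ u := hFu (by simp [hF_def])
  have hqu : q ∈ u := hFu (by simp [hF_def])
  have hru : r ∈ u := hFu (by simp [hF_def])
  have hxqu : x q ∈ u := hFu (by simp [hF_def])
  have hxru : x r ∈ u := hFu (by simp [hF_def])
  set yy : Perm ↥u := swap ⟨q, hqu⟩ ⟨x r, hxru⟩ * swap ⟨q, hqu⟩ ⟨x q, hxqu⟩ *
      (swap ⟨p, hpu⟩ ⟨q, hqu⟩ * swap ⟨p, hpu⟩ ⟨r, hru⟩) with hyy_def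
  have hyy : Equiv.Perm.ofSubtype yy = y := by
    rw [hy4, hyy_def]
    simp only [map_mul, Equiv.Perm.ofSubtype_swap_eq]
  have hyyA : yy ∈ alternatingGroup ↥u := by
    rw [Equiv.Perm.mem_alternatingGroup, hyy_def]
    simp only [map_mul]
    rw [Equiv.Perm.sign_swap (fun h => hq_xr (congrArg Subtype.val h)),
      Equiv.Perm.sign_swap (fun h => hq_xq (congrArg Subtype.val h)),
      Equiv.Perm.sign_swap (fun h => hpq (congrArg Subtype.val h)),
      Equiv.Perm.sign_swap (fun h => hrp (congrArg Subtype.val h).symm)]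
    norm_num
  have hg1 : (⟨yy, hyyA⟩ : alternatingGroup ↥u) ≠ 1 := by
    intro h
    apply hy1
    have hyy1 : yy = 1 := congrArg Subtype.val h
    rw [← hyy, hyy1, map_one]
  haveI := simple_of_card5 (↥u) (by rw [Fintype.card_coe]; exact hu5)
  have hgen1 : Subgroup.normalClosure {(⟨yy, hyyA⟩ : alternatingGroup ↥u)} = ⊤ := by
    rcases (Subgroup.normalClosure_normal
        (s := {(⟨yy, hyyA⟩ : alternatingGroup ↥u)})).eq_bot_or_eq_top with hbot | htop
    · exfalso
      have hmem := Subgroup.subset_normalClosure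
        (s := {(⟨yy, hyyA⟩ : alternatingGroup ↥u)}) (Set.mem_singleton _)
      rw [hbot] at hmem
      exact hg1 (Subgroup.mem_bot.mp hmem)
    · exact htop
  have hHu : Hs u ≤ N := Karg N hNX u ⟨yy, hyyA⟩ (by rw [hyy]; exact hyN) hgen1
  intro z hz
  obtain ⟨t0, hzt0⟩ := mem_XX.mp hz
  set v := u ∪ t0 with hv_def
  have huv : u ⊆ v := Finset.subset_union_left
  have hcv : 5 ≤ Fintype.card ↥v := by
    rw [Fintype.card_coe]
    exact hu5 ▸ Finset.card_le_card huv
  have hpv : p ∈ v := huv hpu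
  have hqv : q ∈ v := huv hqu
  have hrv : r ∈ v := huv hru
  set τ : Perm ↥v := swap ⟨p, hpv⟩ ⟨q, hqv⟩ * swap ⟨p, hpv⟩ ⟨r, hrv⟩ with hτ_def
  have hτ3 : Equiv.Perm.IsThreeCycle τ :=
    Equiv.Perm.isThreeCycle_swap_mul_swap_same
      (fun h => hpq (congrArg Subtype.val h))
      (fun h => hrp (congrArg Subtype.val h).symm)
      (fun h => hrq (congrArg Subtype.val h).symm)
  have hτN : Equiv.Perm.ofSubtype τ ∈ N := by
    apply hHu
    refine ⟨swap ⟨p, hpu⟩ ⟨q, hqu⟩ * swap ⟨p, hpu⟩ ⟨r, hru⟩, ?_, ?_⟩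
    · rw [SetLike.mem_coe, Equiv.Perm.mem_alternatingGroup, map_mul,
        Equiv.Perm.sign_swap (fun h => hpq (congrArg Subtype.val h)),
        Equiv.Perm.sign_swap (fun h => hrp (congrArg Subtype.val h).symm)]
      norm_num
    · rw [hτ_def]
      simp only [map_mul, Equiv.Perm.ofSubtype_swap_eq]
  have hgen2 : Subgroup.normalClosure
      {(⟨τ, hτ3.mem_alternatingGroup⟩ : alternatingGroup ↥v)} = ⊤ :=
    hτ3.alternating_normalClosure (by rw [Nat.card_eq_fintype_card]; exact hcv)
  have hHv : Hs v ≤ N := Karg N hNX v ⟨τ, hτ3.mem_alternatingGroup⟩ hτN hgen2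
  exact hHv (Hs_mono Finset.subset_union_right hzt0)

theorem hom_eq_one [Infinite Ω] {G : Type u} [Group G] (hG : #G < #Ω)
    (φ : ↥(XX Ω) →* G) : φ = 1 := by
  have hinj : ¬ Function.Injective φ := by
    intro hφ
    obtain ⟨p0⟩ := (inferInstance : Nonempty Ω)
    obtain ⟨q0, hq0⟩ := exists_ne p0
    set s0 : Set Ω := {p0, q0} with hs0
    have hJ : ∀ w : ↥(s0ᶜ), swap p0 (w : Ω) * swap p0 q0 ∈ XX Ω := by
      intro w
      have hw := w.2
      simp only [hs0, Set.mem_compl_iff, Set.mem_insert_iff, Set.mem_singleton_iff,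
        not_or] at hw
      exact gen_mem (fun hh => hw.1 hh.symm) (fun hh => hq0 hh.symm) hw.2
    let J : ↥(s0ᶜ) → ↥(XX Ω) := fun w => ⟨_, hJ w⟩
    have hJinj : Function.Injective J := by
      intro w w' hww
      have hval : swap p0 (w : Ω) * swap p0 q0 = swap p0 (w' : Ω) * swap p0 q0 :=
        congrArg Subtype.val hww
      have happ := congrArg (fun σ : Perm Ω => σ q0) hval
      have hw := w.2
      have hw' := w'.2
      simp only [hs0, Set.mem_compl_iff, Set.mem_insert_iff, Set.mem_singleton_iff,
        not_or] at hw hw'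
      simp only [Equiv.Perm.mul_apply, swap_apply_right] at happ
      rw [swap_apply_left, swap_apply_left] at happ
      exact Subtype.ext happ
    have hfin : #(↥s0) < #Ω := by
      have : s0.Finite := (Set.finite_singleton q0).insert p0
      exact lt_of_lt_of_le this.lt_aleph0 (Cardinal.infinite_iff.mp ‹Infinite Ω›)
    have h1 : #Ω ≤ #(↥(XX Ω)) := by
      rw [← Cardinal.mk_compl_of_infinite s0 hfin]
      exact Cardinal.mk_le_of_injective hJinj
    have h2 : #(↥(XX Ω)) ≤ #G := Cardinal.mk_le_of_injective hφ
    exact absurd hG (not_lt.mpr (h1.trans h2))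
  rw [Function.not_injective_iff] at hinj
  obtain ⟨x1, x2, hfeq, hne⟩ := hinj
  set N : Subgroup (Perm Ω) := (φ.ker).map (XX Ω).subtype with hN
  have hNX : ∀ g ∈ XX Ω, ∀ n ∈ N, g * n * g⁻¹ ∈ N := by
    rintro g hg n ⟨m, hm, rfl⟩
    exact ⟨⟨g, hg⟩ * m * ⟨g, hg⟩⁻¹, φ.normal_ker.conj_mem m hm ⟨g, hg⟩, rfl⟩
  have hker : x1 * x2⁻¹ ∈ φ.ker := by
    rw [MonoidHom.mem_ker, map_mul, map_inv, hfeq, mul_inv_cancel]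
  have hx12 : (↑(x1 * x2⁻¹) : Perm Ω) ∈ N := ⟨x1 * x2⁻¹, hker, rfl⟩
  have hx1' : (↑(x1 * x2⁻¹) : Perm Ω) ≠ 1 := by
    intro h
    exact hne (mul_inv_eq_one.mp (Subtype.ext h))
  have hXN : XX Ω ≤ N := key N hNX hx12 hx1'
  ext ξ
  obtain ⟨m, hm, hm2⟩ := hXN ξ.2
  have hmξ : m = ξ := Subtype.ext hm2
  rw [← hmξ]
  exact hm

end Stmt6Aux

open CategoryTheory

/-- There is no small set `S` of group homomorphisms such that the class of
groups co-orthogonal to every morphism of `S` consists exactly of the trivial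
groups. -/
theorem stmt6 :
    ¬ ∃ (ι : Type u) (A B : ι → GrpCat.{u}) (f : ∀ i, A i ⟶ B i),
        ∀ X : GrpCat.{u},
          (∀ i, Function.Bijective (fun g : X ⟶ A i => g ≫ f i)) ↔
            Subsingleton X := by
  rintro ⟨ι, A, B, f, hP⟩
  let κ : Cardinal.{u} := max (Cardinal.sum fun i => #(A i) + #(B i)) Cardinal.aleph0
  let Ω : Type u := (Order.succ κ).out
  letI : DecidableEq Ω := Classical.decEq Ω
  have hΩ : #Ω = Order.succ κ := Cardinal.mk_out _
  have hκΩ : κ < #Ω := by rw [hΩ]; exact Order.lt_succ κ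
  haveI : Infinite Ω := by
    rw [Cardinal.infinite_iff, hΩ]
    exact le_trans (le_max_right _ _) (le_trans (Order.le_succ κ) le_rfl)
  let X : GrpCat.{u} := GrpCat.of ↥(Stmt6Aux.XX Ω)
  have hboundA : ∀ i, #(A i) < #Ω := fun i =>
    lt_of_le_of_lt (le_trans (le_trans (self_le_add_right _ _)
      (Cardinal.le_sum (fun i => #(A i) + #(B i)) i)) (le_max_left _ _)) hκΩ
  have hboundB : ∀ i, #(B i) < #Ω := fun i =>
    lt_of_le_of_lt (le_trans (le_trans (self_le_add_left _ _)
      (Cardinal.le_sum (fun i => #(A i) + #(B i)) i)) (le_max_left _ _)) hκΩ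
  have hbij : ∀ i, Function.Bijective (fun g : X ⟶ A i => g ≫ f i) := by
    intro i
    constructor
    · intro g g' _
      have hg : g.hom = (1 : ↥(Stmt6Aux.XX Ω) →* ↥(A i)) :=
        Stmt6Aux.hom_eq_one (hboundA i) g.hom
      have hg' : g'.hom = (1 : ↥(Stmt6Aux.XX Ω) →* ↥(A i)) :=
        Stmt6Aux.hom_eq_one (hboundA i) g'.hom
      exact GrpCat.hom_ext (hg.trans hg'.symm)
    · intro h
      refine ⟨GrpCat.ofHom (1 : ↥(Stmt6Aux.XX Ω) →* ↥(A i)), ?_⟩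
      have e1 : (GrpCat.ofHom (1 : ↥(Stmt6Aux.XX Ω) →* ↥(A i)) ≫ f i : X ⟶ B i).hom
          = (1 : ↥(Stmt6Aux.XX Ω) →* ↥(B i)) :=
        Stmt6Aux.hom_eq_one (hboundB i) _
      have e2 : h.hom = (1 : ↥(Stmt6Aux.XX Ω) →* ↥(B i)) :=
        Stmt6Aux.hom_eq_one (hboundB i) h.hom
      exact GrpCat.hom_ext (e1.trans e2.symm)
  have hsub : Subsingleton X := (hP X).mp hbij
  haveI hsub' : Subsingleton ↥(Stmt6Aux.XX Ω) := hsub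
  -- `XX Ω` is nontrivial: contradiction
  obtain ⟨p⟩ := (inferInstance : Nonempty Ω)
  obtain ⟨q, hq⟩ := exists_ne p
  obtain ⟨r, hr⟩ := Infinite.exists_notMem_finset ({p, q} : Finset Ω)
  simp only [Finset.mem_insert, Finset.mem_singleton, not_or] at hr
  have hg0 : Equiv.swap p q * Equiv.swap p r ∈ Stmt6Aux.XX Ω :=
    Stmt6Aux.gen_mem (fun h' => hq h'.symm) (fun h' => hr.1 h'.symm) (fun h' => hr.2 h'.symm)
  have heq : (⟨Equiv.swap p q * Equiv.swap p r, hg0⟩ : ↥(Stmt6Aux.XX Ω))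
      = (1 : ↥(Stmt6Aux.XX Ω)) := Subsingleton.elim _ _
  have hval : Equiv.swap p q * Equiv.swap p r = 1 := congrArg Subtype.val heq
  have : (Equiv.swap p q * Equiv.swap p r) p = p := by rw [hval]; rfl
  rw [Equiv.Perm.mul_apply, Equiv.swap_apply_left,
    Equiv.swap_apply_of_ne_of_ne hr.1 hr.2] at this
  exact hr.1 this
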